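/- Let λ = 1 or λ = −1 and let a ∈ k with a ≠ 0. For each n ∈ ℕ, the subspace Ω(λ,a)_n := {f(X) ∈ k[X] : deg f ≤ n} is an O-submodule of Ω(λ,a); in particular these submodules form an increasing filtration Ω(λ,a)_0 ⊆ Ω(λ,a)_1 ⊆ Ω(λ,a)_2 ⊆ ··· of Ω(λ,a) by proper submodules. -/

import Mathlib

open Polynomial

lemma withbot_le_of_lt_succ {x : WithBot ℕ} {n : ℕ} (h : x < ((n + 1 : ℕ) : WithBot ℕ)) :
    x ≤ (n : WithBot ℕ) := by
  cases x with
  | bot => exact bot_le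
  | coe m =>
    rw [Nat.cast_withBot, WithBot.coe_lt_coe] at h
    rw [Nat.cast_withBot, WithBot.coe_le_coe]
    omega

lemma aux_deg {k : Type*} [Field k] (c b : k) (f : k[X]) (n : ℕ) (hf : f.degree ≤ (n : WithBot ℕ)) :
    ((X + C c) * f.comp (X + C b) - (X - C c) * f.comp (X - C b)).degree ≤ (n : WithBot ℕ) := by
  rcases eq_or_ne f 0 with rfl | hf0
  · simp
  have hd1 : (X + C b : k[X]).natDegree = 1 := natDegree_X_add_C b
  have hd2 : (X - C b : k[X]).natDegree = 1 := natDegree_X_sub_C b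
  have hl1 : (f.comp (X + C b)).leadingCoeff = f.leadingCoeff := by
    rw [leadingCoeff_comp (by rw [hd1]; exact one_ne_zero)]
    simp [(monic_X_add_C b).leadingCoeff]
  have hl2 : (f.comp (X - C b)).leadingCoeff = f.leadingCoeff := by
    rw [leadingCoeff_comp (by rw [hd2]; exact one_ne_zero)]
    simp [(monic_X_sub_C b).leadingCoeff]
  have hc1 : f.comp (X + C b) ≠ 0 := fun h => hf0 (leadingCoeff_eq_zero.mp (by rw [← hl1, h]; simp))
  have hc2 : f.comp (X - C b) ≠ 0 := fun h => hf0 (leadingCoeff_eq_zero.mp (by rw [← hl2, h]; simp))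
  have hdc1 : (f.comp (X + C b)).degree = f.degree := by
    rw [degree_eq_natDegree hc1, degree_eq_natDegree hf0, natDegree_comp, hd1, mul_one]
  have hdc2 : (f.comp (X - C b)).degree = f.degree := by
    rw [degree_eq_natDegree hc2, degree_eq_natDegree hf0, natDegree_comp, hd2, mul_one]
  have hdp : ((X + C c) * f.comp (X + C b)).degree = 1 + f.degree := by
    rw [degree_mul, degree_X_add_C, hdc1]
  have hdq : ((X - C c) * f.comp (X - C b)).degree = 1 + f.degree := by
    rw [degree_mul, degree_X_sub_C, hdc2]
  have hlp : ((X + C c) * f.comp (X + C b)).leadingCoeff = f.leadingCoeff := by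
    rw [leadingCoeff_mul, (monic_X_add_C c).leadingCoeff, one_mul, hl1]
  have hlq : ((X - C c) * f.comp (X - C b)).leadingCoeff = f.leadingCoeff := by
    rw [leadingCoeff_mul, (monic_X_sub_C c).leadingCoeff, one_mul, hl2]
  have hp0 : (X + C c) * f.comp (X + C b) ≠ 0 :=
    mul_ne_zero (X_add_C_ne_zero c) hc1
  have hlt := degree_sub_lt (hdp.trans hdq.symm) hp0 (hlp.trans hlq.symm)
  rw [hdp] at hlt
  refine withbot_le_of_lt_succ (lt_of_lt_of_le hlt ?_)
  rw [Nat.cast_add, Nat.cast_one, add_comm]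
  exact add_le_add hf le_rfl



/-- Let `k` be a field of characteristic zero, `lam = 1` or `lam = -1`, and `a ∈ k` with `a ≠ 0`.
`Ω(lam,a)` is the `O`-module with underlying space `k[X]` and action
`O_n · f(X) = lamⁿ (X + n·a) f(X + n) − lam⁻ⁿ (X − n·a) f(X − n)` for `n ≥ 1`
(recorded by `act n f`; since `O` is spanned by the `O_n`, `n ≥ 1`, subspaces stable under all
`act n` are exactly the `O`-submodules).  Then for each `n ∈ ℕ`, the subspace
`Ω(lam,a)_n = {f : deg f ≤ n}` is an `O`-submodule of `Ω(lam,a)`; in particular these proper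
submodules form an increasing filtration `Ω(lam,a)_0 ⊆ Ω(lam,a)_1 ⊆ ⋯` of `Ω(lam,a)`. -/
theorem Omega_module_filtration_of_degree_submodules
    {k : Type*} [Field k] [CharZero k]
    (lam a : k) (hlam : lam = 1 ∨ lam = -1) (ha : a ≠ 0)
    (act : ℕ → Polynomial k → Polynomial k)
    (hact : ∀ (n : ℕ) (f : Polynomial k), act n f =
      lam ^ n • ((Polynomial.X + Polynomial.C ((n : k) * a)) *
          f.comp (Polynomial.X + Polynomial.C (n : k)))
        - (lam ^ n)⁻¹ • ((Polynomial.X - Polynomial.C ((n : k) * a)) *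
          f.comp (Polynomial.X - Polynomial.C (n : k)))) :
    ∀ n : ℕ,
      (∀ m : ℕ, 1 ≤ m → ∀ f ∈ Polynomial.degreeLE k (n : ℕ),
        act m f ∈ Polynomial.degreeLE k (n : ℕ)) ∧
      Polynomial.degreeLE k (n : ℕ) ≠ ⊤ ∧
      Polynomial.degreeLE k (n : ℕ) ≤ Polynomial.degreeLE k ((n + 1 : ℕ)) := by
  intro n
  refine ⟨?_, ?_, ?_⟩
  · intro m hm f hf
    rw [Polynomial.mem_degreeLE] at hf ⊢
    have h1 : lam ^ m * lam ^ m = 1 := by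
      rw [← mul_pow]; rcases hlam with h | h <;> simp [h]
    have h2 : (lam ^ m)⁻¹ = lam ^ m := inv_eq_of_mul_eq_one_right h1
    rw [hact, h2, ← smul_sub]
    exact (Polynomial.degree_smul_le _ _).trans (aux_deg _ _ f n hf)
  · intro h
    have : ((Polynomial.X : k[X]) ^ (n + 1)) ∈ Polynomial.degreeLE k (n : ℕ) := by
      rw [h]; exact Submodule.mem_top
    rw [Polynomial.mem_degreeLE, Polynomial.degree_X_pow, Nat.cast_le] at this
    omega
  · exact Polynomial.degreeLE_mono (by exact_mod_cast Nat.cast_le.mpr (Nat.le_succ n))
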